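/- Let V be a subspace of K⟨G⟩ for a well-ordered set (G, <). Then there exists a reduction operator T relative to (G, <) with ker(T) = V. -/

import Mathlib

/-- A reduction operator relative to a well-ordered set `(G, <)`: an idempotent
`K`-linear endomorphism `T` of `G →₀ K` such that `T g ≤ g` for every generator `g`. -/
def IsReductionOperator {K G : Type*} [Field K] [LinearOrder G]
    (T : (G →₀ K) →ₗ[K] (G →₀ K)) : Prop :=
  T ∘ₗ T = T ∧ ∀ g : G,
    T (Finsupp.single g 1) = Finsupp.single g 1 ∨
      ∀ h ∈ (T (Finsupp.single g 1)).support, h < g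

set_option linter.unusedSectionVars false

open Finsupp Submodule

namespace StmtFiveAux

variable {K G : Type*} [Field K] [LinearOrder G] [WellFoundedLT G]

/-- Leading generator of an element of `G →₀ K`. -/
def lead (x : G →₀ K) : WithBot G := x.support.max

lemma lead_le_iff {x : G →₀ K} {d : WithBot G} :
    lead x ≤ d ↔ ∀ h ∈ x.support, (h : WithBot G) ≤ d := Finset.max_le_iff

lemma lead_add_le (x y : G →₀ K) : lead (x + y) ≤ lead x ⊔ lead y := by
  refine le_trans (Finset.max_mono Finsupp.support_add) ?_
  rw [Finset.max_union]; exact le_rfl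

lemma lead_smul_le (c : K) (x : G →₀ K) : lead (c • x) ≤ lead x :=
  Finset.max_mono Finsupp.support_smul

lemma lead_single_le (g : G) (c : K) : lead (single g c) ≤ (g : WithBot G) := by
  refine lead_le_iff.2 fun h hh => ?_
  have := Finsupp.support_single_subset hh
  simp_all

lemma lead_lt_of_le {x : G →₀ K} {g : G} (h1 : lead x ≤ g) (h2 : x g = 0) :
    lead x < (g : WithBot G) := by
  rcases lt_or_eq_of_le h1 with h | h
  · exact h
  · exact absurd (Finsupp.mem_support_iff.1 (Finset.mem_of_max h)) (by simp [h2])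

/-- `g` is the leading generator of some element of `V`. -/
def Ld (V : Submodule K (G →₀ K)) (g : G) : Prop := ∃ v ∈ V, lead v = (g : WithBot G)

/-- Reduction step: subtract a suitable element of `V` to kill the coefficient at `g`. -/
lemma exists_red {V : Submodule K (G →₀ K)} {g : G} (hg : Ld V g) (x : G →₀ K)
    (hx : lead x ≤ (g : WithBot G)) : ∃ v ∈ V, lead (x - v) < (g : WithBot G) := by
  obtain ⟨v0, hv0V, hv0⟩ := hg
  have hg0 : v0 g ≠ 0 := Finsupp.mem_support_iff.1 (Finset.mem_of_max hv0)
  refine ⟨(x g / v0 g) • v0, V.smul_mem _ hv0V, ?_⟩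
  refine lead_lt_of_le ?_ ?_
  · refine le_trans (Finset.max_mono Finsupp.support_sub) ?_
    rw [Finset.max_union]
    exact sup_le hx (le_trans (lead_smul_le _ _) (le_of_eq hv0))
  · simp [div_mul_cancel₀ _ hg0]

variable (V : Submodule K (G →₀ K))

/-- The family of classes of generators not in `Ld V`. -/
noncomputable def fam : {g : G // ¬ Ld V g} → (G →₀ K) ⧸ V := fun g => mkQ V (single g.1 (1 : K))

lemma comb_eq (l : {g : G // ¬ Ld V g} →₀ K) :
    Finsupp.linearCombination K (fun g : {g : G // ¬ Ld V g} => single g.1 (1 : K)) l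
      = Finsupp.embDomain ⟨Subtype.val, Subtype.val_injective⟩ l := by
  induction l using Finsupp.induction_linear with
  | zero => simp
  | add a b ha hb => rw [map_add, Finsupp.embDomain_add, ha, hb]
  | single a b => simp [Finsupp.embDomain_single, Finsupp.smul_single]

lemma fam_indep : LinearIndependent K (fam V) := by
  rw [linearIndependent_iff]
  intro l hl
  let e : {g : G // ¬ Ld V g} ↪ G := ⟨Subtype.val, Subtype.val_injective⟩
  have hx : Finsupp.embDomain e l ∈ V := by
    rw [← comb_eq V l]
    have := Finsupp.apply_linearCombination K (mkQ V)
      (fun g : {g : G // ¬ Ld V g} => single g.1 (1 : K)) l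
    have h2 : Finsupp.linearCombination K
        (⇑(mkQ V) ∘ fun g : {g : G // ¬ Ld V g} => single g.1 (1 : K)) l = 0 := hl
    rw [← this] at h2
    exact (Submodule.Quotient.mk_eq_zero V).1 h2
  by_contra hl0
  have hne : Finsupp.embDomain e l ≠ 0 := fun h => hl0 (Finsupp.embDomain_eq_zero.1 h)
  obtain ⟨g, hg⟩ := Finset.max_of_nonempty (Finsupp.support_nonempty_iff.2 hne)
  have hgL : Ld V g := ⟨_, hx, hg⟩
  have hgsupp := Finset.mem_of_max hg
  rw [Finsupp.support_embDomain, Finset.mem_map] at hgsupp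
  obtain ⟨a, _, rfl⟩ := hgsupp
  exact a.2 hgL

lemma fam_span : ⊤ ≤ span K (Set.range (fam V)) := by
  have H : ∀ (d : WithBot G) (x : G →₀ K), lead x = d →
      mkQ V x ∈ span K (Set.range (fam V)) := by
    intro d
    induction d using WellFoundedLT.induction with
    | _ d IH =>
      intro x hx
      by_cases hx0 : x = 0
      · simp [hx0]
      obtain ⟨g, hg⟩ := Finset.max_of_nonempty (Finsupp.support_nonempty_iff.2 hx0)
      have hleadx : lead x = (g : WithBot G) := hg
      by_cases hL : Ld V g
      · obtain ⟨v, hvV, hlt⟩ := exists_red hL x (le_of_eq hleadx)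
        have hv0 : mkQ V v = 0 := (Submodule.Quotient.mk_eq_zero V).2 hvV
        have : mkQ V x = mkQ V (x - v) := by rw [map_sub, hv0, sub_zero]
        rw [this]
        exact IH _ (hx ▸ hleadx ▸ hlt) _ rfl
      · set x' := x - x g • single g 1 with hx'
        have hx'lead : lead x' < (g : WithBot G) := by
          refine lead_lt_of_le ?_ ?_
          · refine le_trans (Finset.max_mono Finsupp.support_sub) ?_
            rw [Finset.max_union]
            exact sup_le (le_of_eq hleadx) (le_trans (lead_smul_le _ _) (lead_single_le _ _))
          · simp [hx']
        have hxx : x = x g • single g 1 + x' := by rw [hx']; abel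
        have hdecomp : mkQ V x = x g • fam V ⟨g, hL⟩ + mkQ V x' := by
          conv_lhs => rw [hxx]
          rw [map_add, map_smul]; rfl
        rw [hdecomp]
        exact add_mem (smul_mem _ _ (subset_span ⟨_, rfl⟩))
          (IH _ (hx ▸ hleadx ▸ hx'lead) _ rfl)
  intro z _
  obtain ⟨x, rfl⟩ := mkQ_surjective V z
  exact H _ x rfl

/-- Basis of the quotient. -/
noncomputable def B : Module.Basis {g : G // ¬ Ld V g} K ((G →₀ K) ⧸ V) :=
  Module.Basis.mk (fam_indep V) (fam_span V)

/-- Section of the quotient map. -/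
noncomputable def s : ((G →₀ K) ⧸ V) →ₗ[K] (G →₀ K) :=
  (B V).constr K (fun g => single g.1 (1 : K))

lemma q_comp_s : (mkQ V) ∘ₗ (s V) = LinearMap.id := by
  refine (B V).ext fun i => ?_
  rw [LinearMap.comp_apply, s, Module.Basis.constr_basis]
  show fam V i = _
  rw [B, Module.Basis.mk_apply]
  rfl

/-- The reduction operator. -/
noncomputable def T : (G →₀ K) →ₗ[K] (G →₀ K) := (s V) ∘ₗ (mkQ V)

lemma q_T (x : G →₀ K) : mkQ V (T V x) = mkQ V x := by
  have := congrArg (fun f => f (mkQ V x)) (q_comp_s V)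
  simpa [T] using this

lemma T_idem : (T V) ∘ₗ (T V) = T V := by
  refine LinearMap.ext fun x => ?_
  show T V (T V x) = T V x
  rw [T, LinearMap.comp_apply, LinearMap.comp_apply, show (mkQ V) ((s V) ((mkQ V) x)) = mkQ V x from q_T V x]

lemma T_zero_of_mem {v : G →₀ K} (hv : v ∈ V) : T V v = 0 := by
  simp [T, (Submodule.Quotient.mk_eq_zero V).2 hv]

lemma ker_T : LinearMap.ker (T V) = V := by
  ext x
  constructor
  · intro hx
    have : mkQ V (T V x) = 0 := by rw [LinearMap.mem_ker.1 hx]; simp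
    rw [q_T] at this
    exact (Submodule.Quotient.mk_eq_zero V).1 this
  · exact fun hx => LinearMap.mem_ker.2 (T_zero_of_mem V hx)

lemma T_single_of_not_Ld {g : G} (hg : ¬ Ld V g) : T V (single g (1 : K)) = single g 1 := by
  have : mkQ V (single g (1:K)) = B V ⟨g, hg⟩ := by rw [B, Module.Basis.mk_apply]; rfl
  rw [T, LinearMap.comp_apply, this, s, Module.Basis.constr_basis]

lemma lead_T_le (x : G →₀ K) : lead (T V x) ≤ lead x := by
  have H : ∀ (d : WithBot G) (x : G →₀ K), lead x = d → lead (T V x) ≤ lead x := by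
    intro d
    induction d using WellFoundedLT.induction with
    | _ d IH =>
      intro x hx
      by_cases hx0 : x = 0
      · simp [hx0]
      obtain ⟨g, hg⟩ := Finset.max_of_nonempty (Finsupp.support_nonempty_iff.2 hx0)
      have hleadx : lead x = (g : WithBot G) := hg
      by_cases hL : Ld V g
      · obtain ⟨v, hvV, hlt⟩ := exists_red hL x (le_of_eq hleadx)
        have hTx : T V x = T V (x - v) := by
          rw [map_sub, T_zero_of_mem V hvV, sub_zero]
        rw [hTx, hleadx]
        exact le_of_lt (lt_of_le_of_lt (le_trans (IH _ (hx ▸ hleadx ▸ hlt) _ rfl) (le_refl _))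
          (lt_of_le_of_lt (le_refl _) hlt))
      · set x' := x - x g • single g 1 with hx'
        have hx'lead : lead x' < (g : WithBot G) := by
          refine lead_lt_of_le ?_ ?_
          · refine le_trans (Finset.max_mono Finsupp.support_sub) ?_
            rw [Finset.max_union]
            exact sup_le (le_of_eq hleadx) (le_trans (lead_smul_le _ _) (lead_single_le _ _))
          · simp [hx']
        have hTx : T V x = x g • single g 1 + T V x' := by
          have hxx : x = x g • single g 1 + x' := by rw [hx']; abel
          conv_lhs => rw [hxx]
          rw [map_add, map_smul, T_single_of_not_Ld V hL]
        rw [hTx, hleadx]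
        refine le_trans (lead_add_le _ _) (sup_le ?_ ?_)
        · exact le_trans (lead_smul_le _ _) (lead_single_le _ _)
        · exact le_of_lt (lt_of_le_of_lt (IH _ (hx ▸ hleadx ▸ hx'lead) _ rfl) hx'lead)
  exact H _ x rfl

end StmtFiveAux

theorem stmt_5 {K G : Type*} [Field K] [LinearOrder G] [WellFoundedLT G]
    (V : Submodule K (G →₀ K)) :
    ∃ T : (G →₀ K) →ₗ[K] (G →₀ K), IsReductionOperator T ∧ LinearMap.ker T = V := by
  classical
  refine ⟨StmtFiveAux.T V, ⟨StmtFiveAux.T_idem V, fun g => ?_⟩, StmtFiveAux.ker_T V⟩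
  by_cases hL : StmtFiveAux.Ld V g
  · right
    obtain ⟨v, hvV, hlt⟩ := StmtFiveAux.exists_red hL (Finsupp.single g 1)
      (StmtFiveAux.lead_single_le g 1)
    have hTx : StmtFiveAux.T V (Finsupp.single g 1)
        = StmtFiveAux.T V (Finsupp.single g 1 - v) := by
      rw [map_sub, StmtFiveAux.T_zero_of_mem V hvV, sub_zero]
    intro h hh
    have h1 : (h : WithBot G) ≤ StmtFiveAux.lead (StmtFiveAux.T V (Finsupp.single g 1)) :=
      Finset.le_max hh
    have h2 : StmtFiveAux.lead (StmtFiveAux.T V (Finsupp.single g 1)) < (g : WithBot G) := by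
      rw [hTx]
      exact lt_of_le_of_lt (StmtFiveAux.lead_T_le V _) hlt
    exact_mod_cast lt_of_le_of_lt h1 h2
  · left
    exact StmtFiveAux.T_single_of_not_Ld V hL
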